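/- Suppose every graph on n vertices with at most δn³ triangles can be made triangle-free by deleting at most ε(δ)·n² edges, where ε is monotone. Then every graph on n ≥ 2 vertices in which each edge lies in exactly one triangle has at most 3·ε(1/n)·n² edges. -/

import Mathlib

open Finset SimpleGraph

theorem diamond_free_lemma_from_removal (ε : ℝ → ℝ) (hmono : Antitone ε)
    (hrem : ∀ (n : ℕ) (G : SimpleGraph (Fin n)) [DecidableRel G.Adj] (δ : ℝ), 0 < δ →
      ((G.cliqueFinset 3).card : ℝ) ≤ δ * n ^ 3 →
      ∃ S ⊆ G.edgeFinset, (S.card : ℝ) ≤ ε δ * n ^ 2 ∧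
        ∀ t ∈ G.cliqueFinset 3, ∃ u v : Fin n, u ∈ t ∧ v ∈ t ∧ G.Adj u v ∧ s(u, v) ∈ S) :
    ∀ (n : ℕ), 2 ≤ n → ∀ (G : SimpleGraph (Fin n)) [DecidableRel G.Adj],
      (∀ u v : Fin n, G.Adj u v →
        ∃! t : Finset (Fin n), t ∈ G.cliqueFinset 3 ∧ u ∈ t ∧ v ∈ t) →
      (G.edgeFinset.card : ℝ) ≤ 3 * ε (1 / n) * n ^ 2 := by
  intro n hn G _ huniq
  have hn0 : (0:ℝ) < n := by positivity
  -- uniqueness helper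
  have key : ∀ u v : Fin n, G.Adj u v → ∀ t₁ t₂ : Finset (Fin n),
      t₁ ∈ G.cliqueFinset 3 → t₂ ∈ G.cliqueFinset 3 →
      u ∈ t₁ → v ∈ t₁ → u ∈ t₂ → v ∈ t₂ → t₁ = t₂ := by
    intro u v huv t₁ t₂ h1 h2 hu1 hv1 hu2 hv2
    obtain ⟨t, _, hun⟩ := huniq u v huv
    rw [hun t₁ ⟨h1, hu1, hv1⟩, hun t₂ ⟨h2, hu2, hv2⟩]
  -- every edge has at most n^2 (crude bound on edge count)
  have hEcard : (G.edgeFinset.card : ℕ) ≤ n ^ 2 := by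
    have h1 : G.edgeFinset.card ≤ Fintype.card (Sym2 (Fin n)) := by
      classical
      simpa using Finset.card_le_card (Finset.subset_univ G.edgeFinset)
    have h2 : Fintype.card (Sym2 (Fin n)) = Nat.choose (n + 1) 2 := by
      rw [Sym2.card, Fintype.card_fin]
    have h3 : Nat.choose (n + 1) 2 ≤ n ^ 2 := by
      rw [Nat.choose_two_right]
      simp only [Nat.add_sub_cancel]
      have : (n + 1) * n ≤ 2 * n ^ 2 := by nlinarith
      omega
    omega
  -- triangles ≤ edges: injection triangle ↦ an edge inside it
  have hTE : (G.cliqueFinset 3).card ≤ G.edgeFinset.card := by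
    have hex : ∀ t : Finset (Fin n), ∃ u v : Fin n,
        t ∈ G.cliqueFinset 3 → u ∈ t ∧ v ∈ t ∧ G.Adj u v := by
      intro t
      by_cases ht : t ∈ G.cliqueFinset 3
      · rw [mem_cliqueFinset_iff] at ht
        obtain ⟨a, b, c, hab, hac, hbc, habc⟩ := Finset.card_eq_three.mp ht.2
        refine ⟨a, b, fun _ => ⟨?_, ?_, ?_⟩⟩
        · simp [habc]
        · simp [habc]
        · exact ht.1 (by simp [habc]) (by simp [habc]) hab
      · exact ⟨⟨0, by omega⟩, ⟨0, by omega⟩, fun h => absurd h ht⟩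
    choose u v huv using hex
    apply Finset.card_le_card_of_injOn (fun t => s(u t, v t))
    · intro t ht
      exact mem_edgeFinset.mpr (huv t ht).2.2
    · intro t₁ h₁ t₂ h₂ heq
      simp only [Sym2.eq, Sym2.rel_iff', Prod.mk.injEq, Prod.swap_prod_mk] at heq
      obtain ⟨hu1, hv1, hadj⟩ := huv t₁ h₁
      obtain ⟨hu2, hv2, _⟩ := huv t₂ h₂
      rcases heq with ⟨ha, hb⟩ | ⟨ha, hb⟩
      · exact key (u t₁) (v t₁) hadj t₁ t₂ h₁ h₂ hu1 hv1 (ha ▸ hu2) (hb ▸ hv2)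
      · exact key (u t₁) (v t₁) hadj t₁ t₂ h₁ h₂ hu1 hv1 (ha ▸ hv2) (hb ▸ hu2)
  -- apply removal with δ = 1/n
  have hδ : (0:ℝ) < 1 / n := by positivity
  have hcount : ((G.cliqueFinset 3).card : ℝ) ≤ (1 / n) * n ^ 3 := by
    have : ((G.cliqueFinset 3).card : ℝ) ≤ (n:ℝ) ^ 2 := by
      calc ((G.cliqueFinset 3).card : ℝ) ≤ (G.edgeFinset.card : ℝ) := by exact_mod_cast hTE
        _ ≤ ((n ^ 2 : ℕ) : ℝ) := by exact_mod_cast hEcard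
        _ = (n:ℝ) ^ 2 := by push_cast; ring
    calc ((G.cliqueFinset 3).card : ℝ) ≤ (n:ℝ) ^ 2 := this
      _ = (1 / n) * n ^ 3 := by field_simp
  obtain ⟨S, hSE, hScard, hShit⟩ := hrem n G (1 / n) hδ hcount
  -- triangles ≤ |S|: injection triangle ↦ its edge in S
  have hTS : (G.cliqueFinset 3).card ≤ S.card := by
    have hex : ∀ t : Finset (Fin n), ∃ u v : Fin n,
        t ∈ G.cliqueFinset 3 → u ∈ t ∧ v ∈ t ∧ G.Adj u v ∧ s(u, v) ∈ S := by
      intro t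
      by_cases ht : t ∈ G.cliqueFinset 3
      · obtain ⟨a, b, h⟩ := hShit t ht
        exact ⟨a, b, fun _ => h⟩
      · exact ⟨⟨0, by omega⟩, ⟨0, by omega⟩, fun h => absurd h ht⟩
    choose u v huv using hex
    apply Finset.card_le_card_of_injOn (fun t => s(u t, v t))
    · intro t ht
      exact (huv t ht).2.2.2
    · intro t₁ h₁ t₂ h₂ heq
      simp only [Sym2.eq, Sym2.rel_iff', Prod.mk.injEq, Prod.swap_prod_mk] at heq
      obtain ⟨hu1, hv1, hadj, _⟩ := huv t₁ h₁
      obtain ⟨hu2, hv2, _, _⟩ := huv t₂ h₂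
      rcases heq with ⟨ha, hb⟩ | ⟨ha, hb⟩
      · exact key (u t₁) (v t₁) hadj t₁ t₂ h₁ h₂ hu1 hv1 (ha ▸ hu2) (hb ▸ hv2)
      · exact key (u t₁) (v t₁) hadj t₁ t₂ h₁ h₂ hu1 hv1 (ha ▸ hv2) (hb ▸ hu2)
  -- edges ≤ 3 * triangles : each edge maps to its unique triangle, fibers ≤ 3
  have hE3T : G.edgeFinset.card ≤ 3 * (G.cliqueFinset 3).card := by
    classical
    have hex : ∀ e : Sym2 (Fin n), ∃ t : Finset (Fin n), e ∈ G.edgeFinset →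
        ∃ a b : Fin n, e = s(a, b) ∧ G.Adj a b ∧ t ∈ G.cliqueFinset 3 ∧ a ∈ t ∧ b ∈ t := by
      intro e
      by_cases he : e ∈ G.edgeFinset
      · induction e using Sym2.ind with
        | _ a b =>
          have hab : G.Adj a b := by rwa [mem_edgeFinset, mem_edgeSet] at he
          obtain ⟨t, ⟨htT, hat, hbt⟩, _⟩ := huniq a b hab
          exact ⟨t, fun _ => ⟨a, b, rfl, hab, htT, hat, hbt⟩⟩
      · exact ⟨∅, fun h => absurd h he⟩
    choose g hg using hex
    apply Finset.card_le_mul_card_image_of_maps_to (f := g) (t := G.cliqueFinset 3)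
    · intro e he
      obtain ⟨a, b, _, _, hT, _, _⟩ := hg e he
      exact hT
    · intro t ht
      obtain ⟨a, b, c, hab, hac, hbc, habc⟩ :=
        Finset.card_eq_three.mp ((mem_cliqueFinset_iff.mp ht).2)
      have hsub : {e ∈ G.edgeFinset | g e = t} ⊆ {s(a, b), s(a, c), s(b, c)} := by
        intro e he
        rw [Finset.mem_filter] at he
        obtain ⟨x, y, hexy, hxy, hgT, hx, hy⟩ := hg e he.1
        rw [he.2, habc] at hx hy
        simp only [Finset.mem_insert, Finset.mem_singleton] at hx hy
        have hne : x ≠ y := hxy.ne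
        subst hexy
        simp only [Finset.mem_insert, Finset.mem_singleton]
        rcases hx with rfl | rfl | rfl <;> rcases hy with rfl | rfl | rfl <;>
          first
            | exact absurd rfl hne
            | simp [Sym2.eq_swap]
      calc ({e ∈ G.edgeFinset | g e = t}).card ≤ ({s(a,b), s(a,c), s(b,c)} : Finset (Sym2 (Fin n))).card :=
            Finset.card_le_card hsub
        _ ≤ 3 := by
            have h1 := Finset.card_insert_le s(a,b) ({s(a,c), s(b,c)} : Finset (Sym2 (Fin n)))
            have h2 := Finset.card_insert_le s(a,c) ({s(b,c)} : Finset (Sym2 (Fin n)))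
            simp only [Finset.card_singleton] at h1 h2
            omega
  -- conclude
  calc (G.edgeFinset.card : ℝ) ≤ 3 * ((G.cliqueFinset 3).card : ℝ) := by exact_mod_cast hE3T
    _ ≤ 3 * (S.card : ℝ) := by
        have : ((G.cliqueFinset 3).card : ℝ) ≤ (S.card : ℝ) := by exact_mod_cast hTS
        linarith
    _ ≤ 3 * (ε (1 / n) * n ^ 2) := by linarith
    _ = 3 * ε (1 / n) * n ^ 2 := by ring
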